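/- The ℚ-algebra endomorphism of ℚ[c₁,c₂,d₂] fixing c₁ and d₂ and sending c₂ to 3d₂ − c₂ maps the ideal I (generated by c₁⁴ + 3c₂² − 9c₂d₂ − 3d₂², c₁²c₂ − c₂d₂ − 3d₂², c₁²d₂ − 3d₂², 9c₁c₂² − 14c₁c₂d₂, 3c₁d₂² − 2c₁c₂d₂) into itself, and therefore induces a ring involution of R = ℚ[c₁,c₂,d₂]/I. -/
import Mathlib


open MvPolynomial

noncomputable section

abbrev c1 : MvPolynomial (Fin 3) ℚ := X 0
abbrev c2 : MvPolynomial (Fin 3) ℚ := X 1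
abbrev d2 : MvPolynomial (Fin 3) ℚ := X 2

def chowIdeal : Ideal (MvPolynomial (Fin 3) ℚ) :=
  Ideal.span {c1 ^ 4 + 3 * c2 ^ 2 - 9 * c2 * d2 - 3 * d2 ^ 2,
    c1 ^ 2 * c2 - c2 * d2 - 3 * d2 ^ 2,
    c1 ^ 2 * d2 - 3 * d2 ^ 2,
    9 * c1 * c2 ^ 2 - 14 * c1 * c2 * d2,
    3 * c1 * d2 ^ 2 - 2 * c1 * c2 * d2}

/-- The ℚ-algebra endomorphism fixing `c₁, d₂` and sending `c₂ ↦ 3d₂ − c₂`. -/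
def invol : MvPolynomial (Fin 3) ℚ →ₐ[ℚ] MvPolynomial (Fin 3) ℚ :=
  MvPolynomial.aeval ![c1, 3 * d2 - c2, d2]

lemma g1_mem : c1 ^ 4 + 3 * c2 ^ 2 - 9 * c2 * d2 - 3 * d2 ^ 2 ∈ chowIdeal :=
  Ideal.subset_span (by simp [Set.mem_insert_iff])

lemma g2_mem : c1 ^ 2 * c2 - c2 * d2 - 3 * d2 ^ 2 ∈ chowIdeal :=
  Ideal.subset_span (by simp [Set.mem_insert_iff])

lemma g3_mem : c1 ^ 2 * d2 - 3 * d2 ^ 2 ∈ chowIdeal :=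
  Ideal.subset_span (by simp [Set.mem_insert_iff])

lemma g4_mem : 9 * c1 * c2 ^ 2 - 14 * c1 * c2 * d2 ∈ chowIdeal :=
  Ideal.subset_span (by simp [Set.mem_insert_iff])

lemma g5_mem : 3 * c1 * d2 ^ 2 - 2 * c1 * c2 * d2 ∈ chowIdeal :=
  Ideal.subset_span (by simp [Set.mem_insert_iff])

lemma invol_invol : ∀ p : MvPolynomial (Fin 3) ℚ, invol (invol p) = p := by
  have h : invol.comp invol = AlgHom.id ℚ _ := by
    apply MvPolynomial.algHom_ext
    intro i
    fin_cases i <;> simp [invol, map_ofNat]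
  intro p
  have := congrArg (fun f => f p) h
  simpa using this

/-- The endomorphism `c₂ ↦ 3d₂ − c₂` maps the ideal `I` into itself and is an
involution; hence it induces a ring involution of `R = ℚ[c₁,c₂,d₂]/I`. -/
theorem invol_preserves_chowIdeal :
    (∀ p ∈ chowIdeal, invol p ∈ chowIdeal) ∧
    (∀ p : MvPolynomial (Fin 3) ℚ, invol (invol p) = p) := by
  constructor
  · intro p hp
    induction hp using Submodule.span_induction with
    | mem x hx =>
      rcases hx with h | h | h | h | h
      · subst h
        have : invol (c1 ^ 4 + 3 * c2 ^ 2 - 9 * c2 * d2 - 3 * d2 ^ 2)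
            = c1 ^ 4 + 3 * c2 ^ 2 - 9 * c2 * d2 - 3 * d2 ^ 2 := by
          simp [invol, map_ofNat]; ring
        rw [this]; exact g1_mem
      · subst h
        have : invol (c1 ^ 2 * c2 - c2 * d2 - 3 * d2 ^ 2)
            = 3 * (c1 ^ 2 * d2 - 3 * d2 ^ 2) - (c1 ^ 2 * c2 - c2 * d2 - 3 * d2 ^ 2) := by
          simp [invol, map_ofNat]; ring
        rw [this]
        exact Ideal.sub_mem _ (Ideal.mul_mem_left _ _ g3_mem) g2_mem
      · subst h
        have : invol (c1 ^ 2 * d2 - 3 * d2 ^ 2) = c1 ^ 2 * d2 - 3 * d2 ^ 2 := by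
          simp [invol, map_ofNat]
        rw [this]; exact g3_mem
      · subst h
        have : invol (9 * c1 * c2 ^ 2 - 14 * c1 * c2 * d2)
            = (9 * c1 * c2 ^ 2 - 14 * c1 * c2 * d2)
              + 13 * (3 * c1 * d2 ^ 2 - 2 * c1 * c2 * d2) := by
          simp [invol, map_ofNat]; ring
        rw [this]
        exact Ideal.add_mem _ g4_mem (Ideal.mul_mem_left _ _ g5_mem)
      · rw [Set.mem_singleton_iff] at h
        subst h
        have : invol (3 * c1 * d2 ^ 2 - 2 * c1 * c2 * d2)
            = (-1) * (3 * c1 * d2 ^ 2 - 2 * c1 * c2 * d2) := by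
          simp [invol, map_ofNat]; ring
        rw [this]
        exact Ideal.mul_mem_left _ _ g5_mem
    | zero => simp
    | add x y _ _ hx hy => rw [map_add]; exact Ideal.add_mem _ hx hy
    | smul a x _ hx =>
      rw [smul_eq_mul, map_mul]
      exact Ideal.mul_mem_left _ _ hx
  · exact invol_invol

end
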